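/- Fix a real ρ with 0 < ρ < 1. For each integer n ≥ 2, let G_n(1) denote the single-node freshness in the n-node fully connected network, defined by the backward recursion G_n(n) = 1/(1+ρ) and G_n(j) = (j/n + (j(n−j)/(n−1))·G_n(j+1)) / (ρ + j/n + j(n−j)/(n−1)) for j = 1, …, n−1. Then there exist constants c₂ ≥ c₁ > 0 and an integer N such that c₁·n^{-ρ} ≤ G_n(1) ≤ c₂·n^{-ρ} for all n ≥ N; i.e., the freshness decreases to 0 as n^{-ρ}. -/

import Mathlib

open Finset Real

/-- Bernoulli / Young: for `0 ≤ ρ ≤ 1` and `x ≥ 0`, `x ^ ρ ≤ ρ*x + (1-ρ)`. -/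
lemma young_aux {ρ x : ℝ} (h0 : 0 ≤ ρ) (h1 : ρ ≤ 1) (hx : 0 ≤ x) :
    x ^ ρ ≤ ρ * x + (1 - ρ) := by
  have := Real.geom_mean_le_arith_mean2_weighted h0 (by linarith : (0:ℝ) ≤ 1 - ρ)
    hx zero_le_one (by ring)
  simpa using this

noncomputable def Pprod (ρ : ℝ) (j : ℕ) : ℝ := ∏ i ∈ Finset.Ico 1 j, (((i:ℝ) + ρ)/i)

lemma Pprod_one (ρ : ℝ) : Pprod ρ 1 = 1 := by simp [Pprod]

lemma Pprod_succ (ρ : ℝ) {j : ℕ} (hj : 1 ≤ j) :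
    Pprod ρ (j+1) = Pprod ρ j * (((j:ℝ) + ρ)/j) := by
  rw [Pprod, Pprod, Finset.prod_Ico_succ_top hj]

lemma Pprod_pos {ρ : ℝ} (hρ : 0 < ρ) (j : ℕ) : 0 < Pprod ρ j := by
  apply Finset.prod_pos
  intro i hi
  simp only [Finset.mem_Ico] at hi
  have : (0:ℝ) < i := by exact_mod_cast hi.1
  positivity

lemma Pprod_ge {ρ : ℝ} (hρ0 : 0 < ρ) (hρ1 : ρ < 1) :
    ∀ j : ℕ, 1 ≤ j → ((j:ℝ)) ^ ρ ≤ Pprod ρ j := by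
  intro j hj
  induction j with
  | zero => omega
  | succ k ih =>
    rcases Nat.eq_or_lt_of_le hj with h | h
    · simp [← h, Pprod_one]
    · have hk : 1 ≤ k := by omega
      have ihk := ih hk
      have hkR : (1:ℝ) ≤ (k:ℝ) := by exact_mod_cast hk
      have hkpos : (0:ℝ) < k := by linarith
      rw [Pprod_succ ρ hk]
      have key : (((k:ℝ)+1)/k) ^ ρ ≤ ((k:ℝ) + ρ)/k := by
        have := young_aux hρ0.le hρ1.le (by positivity : (0:ℝ) ≤ ((k:ℝ)+1)/k)
        calc (((k:ℝ)+1)/k) ^ ρ ≤ ρ * (((k:ℝ)+1)/k) + (1 - ρ) := this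
          _ = ((k:ℝ) + ρ)/k := by field_simp; ring
      have hmul : ((k:ℝ)+1) ^ ρ = (k:ℝ) ^ ρ * (((k:ℝ)+1)/k) ^ ρ := by
        rw [← Real.mul_rpow (by positivity) (by positivity)]
        congr 1
        field_simp
      push_cast
      rw [hmul]
      calc (k:ℝ) ^ ρ * (((k:ℝ)+1)/k) ^ ρ ≤ (k:ℝ) ^ ρ * (((k:ℝ) + ρ)/k) := by
            apply mul_le_mul_of_nonneg_left key (by positivity)
        _ ≤ Pprod ρ k * (((k:ℝ) + ρ)/k) := by
            apply mul_le_mul_of_nonneg_right ihk (by positivity)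

lemma Pprod_le {ρ : ℝ} (hρ0 : 0 < ρ) :
    ∀ j : ℕ, 1 ≤ j → Pprod ρ j ≤ Real.exp ρ * ((j:ℝ)) ^ ρ := by
  have main : ∀ j : ℕ, 1 ≤ j → Pprod ρ j ≤ Real.exp (ρ * (1 - 1/j)) * ((j:ℝ)) ^ ρ := by
    intro j hj
    induction j with
    | zero => omega
    | succ k ih =>
      rcases Nat.eq_or_lt_of_le hj with h | h
      · rw [← h]
        simp [Pprod_one, Real.exp_nonneg]
      · have hk : 1 ≤ k := by omega
        have ihk := ih hk
        have hkR : (1:ℝ) ≤ (k:ℝ) := by exact_mod_cast hk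
        have hkpos : (0:ℝ) < k := by linarith
        rw [Pprod_succ ρ hk]
        -- step 1 : (k+ρ)/k ≤ exp (ρ/k)
        have h1 : ((k:ℝ) + ρ)/k ≤ Real.exp (ρ/k) := by
          have := Real.add_one_le_exp (ρ/(k:ℝ))
          calc ((k:ℝ) + ρ)/k = ρ/k + 1 := by field_simp; ring
            _ ≤ Real.exp (ρ/k) := this
        -- step 2 : exp(ρ/(k+1)) * k^ρ ≤ (k+1)^ρ
        have h2 : Real.exp (ρ/((k:ℝ)+1)) * (k:ℝ) ^ ρ ≤ ((k:ℝ)+1) ^ ρ := by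
          have hlog : 1/((k:ℝ)+1) ≤ Real.log (((k:ℝ)+1)/k) := by
            have hx : (0:ℝ) < (k:ℝ)/((k:ℝ)+1) := by positivity
            have := Real.log_le_sub_one_of_pos hx
            have hrw : Real.log ((k:ℝ)/((k:ℝ)+1)) = - Real.log (((k:ℝ)+1)/k) := by
              rw [← Real.log_inv]
              congr 1
              field_simp
            rw [hrw] at this
            have : -Real.log (((k:ℝ)+1)/(k:ℝ)) ≤ -(1/((k:ℝ)+1)) := by
              calc -Real.log (((k:ℝ)+1)/(k:ℝ)) ≤ (k:ℝ)/((k:ℝ)+1) - 1 := this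
                _ = -(1/((k:ℝ)+1)) := by field_simp; ring
            linarith
          have hratio : Real.exp (ρ/((k:ℝ)+1)) ≤ (((k:ℝ)+1)/k) ^ ρ := by
            rw [Real.rpow_def_of_pos (by positivity)]
            apply Real.exp_le_exp.2
            calc ρ/((k:ℝ)+1) = ρ * (1/((k:ℝ)+1)) := by ring
              _ ≤ ρ * Real.log (((k:ℝ)+1)/k) := by
                  apply mul_le_mul_of_nonneg_left hlog hρ0.le
              _ = Real.log (((k:ℝ)+1)/k) * ρ := by ring
          calc Real.exp (ρ/((k:ℝ)+1)) * (k:ℝ) ^ ρ ≤ (((k:ℝ)+1)/k) ^ ρ * (k:ℝ) ^ ρ := by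
                apply mul_le_mul_of_nonneg_right hratio (by positivity)
            _ = ((k:ℝ)+1) ^ ρ := by
                rw [← Real.mul_rpow (by positivity) (by positivity)]
                congr 1
                field_simp
        push_cast
        have hPk : 0 < Pprod ρ k := Pprod_pos hρ0 k
        have e1 : Real.exp (ρ*(1-1/(k:ℝ))) * Real.exp (ρ/(k:ℝ)) = Real.exp ρ := by
          rw [← Real.exp_add]; congr 1; field_simp; ring
        have e2 : Real.exp (ρ*(1-1/((k:ℝ)+1))) * Real.exp (ρ/((k:ℝ)+1)) = Real.exp ρ := by
          rw [← Real.exp_add]; congr 1; field_simp; ring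
        calc Pprod ρ k * (((k:ℝ) + ρ)/k)
            ≤ (Real.exp (ρ * (1 - 1/k)) * (k:ℝ) ^ ρ) * Real.exp (ρ/k) := by
              apply mul_le_mul ihk h1 (by positivity) (by positivity)
          _ = Real.exp ρ * (k:ℝ) ^ ρ := by rw [mul_right_comm, e1]
          _ = Real.exp (ρ*(1-1/((k:ℝ)+1))) * (Real.exp (ρ/((k:ℝ)+1)) * (k:ℝ) ^ ρ) := by
              rw [← mul_assoc, e2]
          _ ≤ Real.exp (ρ*(1-1/((k:ℝ)+1))) * ((k:ℝ)+1) ^ ρ := by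
              apply mul_le_mul_of_nonneg_left h2 (by positivity)
  intro j hj
  have hjR : (1:ℝ) ≤ (j:ℝ) := by exact_mod_cast hj
  calc Pprod ρ j ≤ Real.exp (ρ * (1 - 1/j)) * ((j:ℝ)) ^ ρ := main j hj
    _ ≤ Real.exp ρ * ((j:ℝ)) ^ ρ := by
        apply mul_le_mul_of_nonneg_right _ (by positivity)
        apply Real.exp_le_exp.2
        have : 0 ≤ 1/(j:ℝ) := by positivity
        nlinarith

/-- decrement lemma: for x ≥ 1, x^(1-ρ) - (x-1)^(1-ρ) ≥ (1-ρ) * x^(-ρ) -/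
lemma rpow_decrement {ρ x : ℝ} (hρ0 : 0 < ρ) (hρ1 : ρ < 1) (hx : 1 ≤ x) :
    (1 - ρ) * x ^ (-ρ) ≤ x ^ (1-ρ) - (x-1) ^ (1-ρ) := by
  have hx0 : (0:ℝ) < x := by linarith
  have hx1 : (0:ℝ) ≤ x - 1 := by linarith
  have key : ((x-1)/x) ^ (1-ρ) ≤ (1-ρ) * ((x-1)/x) + ρ := by
    have := young_aux (by linarith : (0:ℝ) ≤ 1-ρ) (by linarith) (by positivity : (0:ℝ) ≤ (x-1)/x)
    linarith [this]
  have hmul : ((x-1)/x) ^ (1-ρ) * x ^ (1-ρ) = (x-1) ^ (1-ρ) := by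
    rw [← Real.mul_rpow (by positivity) (by positivity)]
    congr 1
    field_simp
  have hxpow : x ^ (1-ρ) = x * x ^ (-ρ) := by
    rw [show (1-ρ) = 1 + (-ρ) by ring, Real.rpow_add hx0, Real.rpow_one]
  have h2 : (x-1) ^ (1-ρ) ≤ ((1-ρ) * ((x-1)/x) + ρ) * x ^ (1-ρ) := by
    rw [← hmul]
    apply mul_le_mul_of_nonneg_right key (by positivity)
  have h3 : ((1-ρ) * ((x-1)/x) + ρ) * x ^ (1-ρ) = x ^ (1-ρ) - (1-ρ) * x ^ (-ρ) := by
    rw [hxpow]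
    field_simp
    ring
  linarith [h2, h3.symm.le]

section
open Real

/-- pure real arithmetic for the [0,1] bounds induction step -/
lemma step01 {ρ x N g : ℝ} (hρ0 : 0 < ρ) (hx1 : 1 ≤ x) (hxN : x + 1 ≤ N)
    (hN : 2 ≤ N) (hg0 : 0 ≤ g) (hg1 : g ≤ 1) :
    0 ≤ (x / N + x * (N - x) / (N - 1) * g) / (ρ + x / N + x * (N - x) / (N - 1)) ∧
    (x / N + x * (N - x) / (N - 1) * g) / (ρ + x / N + x * (N - x) / (N - 1)) ≤ 1 := by
  have hb : (0:ℝ) < x / N := by apply div_pos <;> linarith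
  have hc : (0:ℝ) < x * (N - x) / (N - 1) := by
    apply div_pos (by nlinarith) (by linarith)
  have hD : (0:ℝ) < ρ + x / N + x * (N - x) / (N - 1) := by linarith
  constructor
  · apply div_nonneg _ hD.le
    nlinarith
  · rw [div_le_one hD]
    nlinarith

/-- pure real arithmetic for the lower-bound induction step -/
lemma step_low {ρ x N p g : ℝ} (hρ0 : 0 < ρ) (hx1 : 1 ≤ x) (hxN : x + 1 ≤ N)
    (hN : 2 ≤ N) (hp0 : 0 ≤ p) (hple : p * (1 + ρ) ≤ 1)
    (hg : p * ((x + ρ) / x) ≤ g) :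
    p ≤ (x / N + x * (N - x) / (N - 1) * g) / (ρ + x / N + x * (N - x) / (N - 1)) := by
  have hx0 : (0:ℝ) < x := by linarith
  have hb : (0:ℝ) < x / N := by apply div_pos <;> linarith
  have hc : (0:ℝ) < x * (N - x) / (N - 1) := by
    apply div_pos (by nlinarith) (by linarith)
  have hD : (0:ℝ) < ρ + x / N + x * (N - x) / (N - 1) := by linarith
  rw [le_div_iff₀ hD]
  have hcid : x * (N - x) / (N - 1) * ((x + ρ) / x) =
      x * (N - x) / (N - 1) + ρ * ((N - x) / (N - 1)) := by
    have h1 : x ≠ 0 := ne_of_gt hx0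
    have h2 : N - 1 ≠ 0 := by intro h; nlinarith [h]
    field_simp
  have ht : (N - x) / (N - 1) = 1 - (x - 1) / (N - 1) := by
    have h2 : N - 1 ≠ 0 := by intro h; nlinarith [h]
    field_simp
    ring
  have h2' : (x - 1) / (N - 1) ≤ x / N := by
    rw [div_le_div_iff₀ (by linarith) (by linarith)]
    nlinarith
  have h30 : 0 ≤ (x - 1) / (N - 1) := by
    apply div_nonneg (by linarith) (by linarith)
  have hkey : p * ρ * ((x - 1) / (N - 1)) ≤ x / N * (1 - p) := by
    have s1 : p * ρ * ((x - 1) / (N - 1)) ≤ p * ρ * (x / N) :=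
      mul_le_mul_of_nonneg_left h2' (by positivity)
    have s2 : p * ρ * (x / N) ≤ (1 - p) * (x / N) := by
      apply mul_le_mul_of_nonneg_right _ hb.le
      nlinarith
    nlinarith [s1, s2]
  have hmain : p * (ρ + x / N + x * (N - x) / (N - 1)) ≤
      x / N + x * (N - x) / (N - 1) * (p * ((x + ρ) / x)) := by
    have hrw : x * (N - x) / (N - 1) * (p * ((x + ρ) / x)) =
        p * (x * (N - x) / (N - 1) * ((x + ρ) / x)) := by ring
    rw [hrw, hcid, ht]
    nlinarith [hkey]
  calc p * (ρ + x / N + x * (N - x) / (N - 1)) ≤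
        x / N + x * (N - x) / (N - 1) * (p * ((x + ρ) / x)) := hmain
    _ ≤ x / N + x * (N - x) / (N - 1) * g := by nlinarith [hg, hc.le]

end

section
open Finset Real
variable {ρ : ℝ} {G : ℕ → ℕ → ℝ}
variable (hρ0 : 0 < ρ) (hρ1 : ρ < 1)
  (hGn : ∀ n : ℕ, 2 ≤ n → G n n = 1 / (1 + ρ))
  (hGrec : ∀ n : ℕ, 2 ≤ n → ∀ j : ℕ, 1 ≤ j → j ≤ n - 1 →
      G n j = ((j : ℝ) / n + ((j : ℝ) * ((n : ℝ) - j) / ((n : ℝ) - 1)) * G n (j + 1)) /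
        (ρ + (j : ℝ) / n + (j : ℝ) * ((n : ℝ) - j) / ((n : ℝ) - 1)))

include hρ0 hGn hGrec in
lemma G_bounds : ∀ n : ℕ, 2 ≤ n → ∀ j : ℕ, 1 ≤ j → j ≤ n → 0 ≤ G n j ∧ G n j ≤ 1 := by
  intro n hn
  have key : ∀ d j : ℕ, 1 ≤ j → j + d = n → 0 ≤ G n j ∧ G n j ≤ 1 := by
    intro d
    induction d with
    | zero =>
      intro j h1 h2
      have hjn : j = n := by omega
      rw [hjn, hGn n hn]
      constructor
      · positivity
      · rw [div_le_one (by linarith)]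
        linarith
    | succ d ih =>
      intro j h1 h2
      have IH := ih (j+1) (by omega) (by omega)
      have hx1 : (1:ℝ) ≤ (j:ℝ) := by exact_mod_cast h1
      have hxN : (j:ℝ) + 1 ≤ (n:ℝ) := by exact_mod_cast (by omega : j + 1 ≤ n)
      rw [hGrec n hn j h1 (by omega)]
      exact step01 hρ0 hx1 hxN (by exact_mod_cast hn) IH.1 IH.2
  intro j h1 h2
  exact key (n - j) j h1 (by omega)

include hρ0 hρ1 hGn hGrec in
lemma G_low : ∀ n : ℕ, 2 ≤ n → ∀ j : ℕ, 1 ≤ j → j ≤ n →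
    (Real.exp (-ρ)/(1+ρ)) * (n:ℝ) ^ (-ρ) * Pprod ρ j ≤ G n j := by
  intro n hn
  have hN : (2:ℝ) ≤ (n:ℝ) := by exact_mod_cast hn
  have hN0 : (0:ℝ) < (n:ℝ) := by linarith
  have ha0 : 0 < Real.exp (-ρ)/(1+ρ) := by positivity
  have hφle : ∀ j : ℕ, 1 ≤ j → j ≤ n →
      Real.exp (-ρ)/(1+ρ) * (n:ℝ) ^ (-ρ) * Pprod ρ j ≤ 1/(1+ρ) := by
    intro j h1 h2
    have hj0 : (0:ℝ) < (j:ℝ) := by exact_mod_cast Nat.lt_of_lt_of_le Nat.zero_lt_one h1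
    have hP : Pprod ρ j ≤ Real.exp ρ * (j:ℝ) ^ ρ := Pprod_le hρ0 j h1
    have hjn : (j:ℝ) ^ ρ ≤ (n:ℝ) ^ ρ :=
      Real.rpow_le_rpow hj0.le (by exact_mod_cast h2) hρ0.le
    have hprod : (n:ℝ) ^ (-ρ) * (n:ℝ) ^ ρ = 1 := by
      rw [← Real.rpow_add hN0]; simp
    calc Real.exp (-ρ)/(1+ρ) * (n:ℝ) ^ (-ρ) * Pprod ρ j
        ≤ Real.exp (-ρ)/(1+ρ) * (n:ℝ) ^ (-ρ) * (Real.exp ρ * (n:ℝ) ^ ρ) := by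
          apply mul_le_mul_of_nonneg_left _ (by positivity)
          exact hP.trans (mul_le_mul_of_nonneg_left hjn (Real.exp_nonneg ρ))
      _ = (Real.exp (-ρ) * Real.exp ρ) * ((n:ℝ) ^ (-ρ) * (n:ℝ) ^ ρ) / (1+ρ) := by
          ring
      _ = 1/(1+ρ) := by rw [hprod, ← Real.exp_add]; simp
  have key : ∀ d j : ℕ, 1 ≤ j → j + d = n →
      Real.exp (-ρ)/(1+ρ) * (n:ℝ) ^ (-ρ) * Pprod ρ j ≤ G n j := by
    intro d
    induction d with
    | zero =>
      intro j h1 h2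
      have hjn : j = n := by omega
      rw [hjn, hGn n hn]
      exact hφle n (by omega) le_rfl
    | succ d ih =>
      intro j h1 h2
      have IH := ih (j+1) (by omega) (by omega)
      have hx1 : (1:ℝ) ≤ (j:ℝ) := by exact_mod_cast h1
      have hx0 : (0:ℝ) < (j:ℝ) := by linarith
      have hxN : (j:ℝ) + 1 ≤ (n:ℝ) := by exact_mod_cast (by omega : j + 1 ≤ n)
      rw [hGrec n hn j h1 (by omega)]
      have hp0 : 0 ≤ Real.exp (-ρ)/(1+ρ) * (n:ℝ) ^ (-ρ) * Pprod ρ j := by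
        have := (Pprod_pos hρ0 j).le
        positivity
      have hple : (Real.exp (-ρ)/(1+ρ) * (n:ℝ) ^ (-ρ) * Pprod ρ j) * (1 + ρ) ≤ 1 := by
        have h := hφle j h1 (by omega)
        calc (Real.exp (-ρ)/(1+ρ) * (n:ℝ) ^ (-ρ) * Pprod ρ j) * (1 + ρ)
            ≤ (1/(1+ρ)) * (1+ρ) := mul_le_mul_of_nonneg_right h (by linarith)
          _ = 1 := by field_simp
      have hg : (Real.exp (-ρ)/(1+ρ) * (n:ℝ) ^ (-ρ) * Pprod ρ j) * (((j:ℝ) + ρ)/(j:ℝ))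
          ≤ G n (j+1) := by
        have hrw : (Real.exp (-ρ)/(1+ρ) * (n:ℝ) ^ (-ρ) * Pprod ρ j) * (((j:ℝ) + ρ)/(j:ℝ))
            = Real.exp (-ρ)/(1+ρ) * (n:ℝ) ^ (-ρ) * Pprod ρ (j+1) := by
          rw [Pprod_succ ρ h1]; ring
        rw [hrw]
        convert IH using 4
      exact step_low hρ0 hx1 hxN hN hp0 hple hg
  intro j h1 h2
  exact key (n - j) j h1 (by omega)

end

section
open Real

/-- pure real arithmetic for the upper-bound induction step -/
lemma step_up {ρ x N Φ θ θ1 g : ℝ} (hρ0 : 0 < ρ) (hx1 : 1 ≤ x)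
    (hxN : 2 * x ≤ N - 1) (hN : 2 ≤ N) (hΦ0 : 0 ≤ Φ) (hθ10 : 0 ≤ θ1)
    (hθd0 : 0 ≤ θ - θ1) (hkey : x / N ≤ Φ * (θ - θ1) * (x / 2))
    (hg : g ≤ Φ * ((x + ρ) / x) * (1 + θ1)) (hg0 : 0 ≤ g) :
    (x / N + x * (N - x) / (N - 1) * g) / (ρ + x / N + x * (N - x) / (N - 1)) ≤
      Φ * (1 + θ) := by
  have hx0 : (0:ℝ) < x := by linarith
  have hxN' : x + 1 ≤ N := by linarith
  have hb : (0:ℝ) < x / N := by apply div_pos <;> linarith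
  have hc : (0:ℝ) < x * (N - x) / (N - 1) := by
    apply div_pos (by nlinarith) (by linarith)
  have hD : (0:ℝ) < ρ + x / N + x * (N - x) / (N - 1) := by linarith
  rw [div_le_iff₀ hD]
  have hcid : x * (N - x) / (N - 1) * ((x + ρ) / x) =
      x * (N - x) / (N - 1) + ρ * ((N - x) / (N - 1)) := by
    have h1 : x ≠ 0 := ne_of_gt hx0
    have h2 : N - 1 ≠ 0 := by intro h; nlinarith [h]
    field_simp
  have hfrac1 : (N - x) / (N - 1) ≤ 1 := by
    rw [div_le_one (by linarith)]
    linarith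
  have hcup : x * (N - x) / (N - 1) * ((x + ρ) / x) ≤ x * (N - x) / (N - 1) + ρ := by
    rw [hcid]
    nlinarith [hfrac1]
  have hc2 : x / 2 ≤ x * (N - x) / (N - 1) := by
    rw [div_le_div_iff₀ (by norm_num) (by linarith)]
    nlinarith
  -- c * g ≤ (c + ρ) * (Φ * (1 + θ1))
  have hA0 : 0 ≤ Φ * (1 + θ1) := by positivity
  have h1 : x * (N - x) / (N - 1) * g ≤
      (x * (N - x) / (N - 1) + ρ) * (Φ * (1 + θ1)) := by
    calc x * (N - x) / (N - 1) * g
        ≤ x * (N - x) / (N - 1) * (Φ * ((x + ρ) / x) * (1 + θ1)) :=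
          mul_le_mul_of_nonneg_left hg hc.le
      _ = (x * (N - x) / (N - 1) * ((x + ρ) / x)) * (Φ * (1 + θ1)) := by ring
      _ ≤ (x * (N - x) / (N - 1) + ρ) * (Φ * (1 + θ1)) :=
          mul_le_mul_of_nonneg_right hcup hA0
  -- x/N ≤ Φ * (θ - θ1) * c
  have h2 : x / N ≤ Φ * (θ - θ1) * (x * (N - x) / (N - 1)) := by
    calc x / N ≤ Φ * (θ - θ1) * (x / 2) := hkey
      _ ≤ Φ * (θ - θ1) * (x * (N - x) / (N - 1)) :=
          mul_le_mul_of_nonneg_left hc2 (by positivity)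
  nlinarith [h1, h2, mul_nonneg hA0 hb.le,
    mul_nonneg (mul_nonneg hΦ0 hθd0) (by linarith : (0:ℝ) ≤ ρ + x / N)]

end

section
open Finset Real
variable {ρ : ℝ} {G : ℕ → ℕ → ℝ}
variable (hρ0 : 0 < ρ) (hρ1 : ρ < 1)
  (hGn : ∀ n : ℕ, 2 ≤ n → G n n = 1 / (1 + ρ))
  (hGrec : ∀ n : ℕ, 2 ≤ n → ∀ j : ℕ, 1 ≤ j → j ≤ n - 1 →
      G n j = ((j : ℝ) / n + ((j : ℝ) * ((n : ℝ) - j) / ((n : ℝ) - 1)) * G n (j + 1)) /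
        (ρ + (j : ℝ) / n + (j : ℝ) * ((n : ℝ) - j) / ((n : ℝ) - 1)))

include hρ0 hρ1 hGn hGrec in
lemma G_up : ∀ n : ℕ, 2 ≤ n → G n 1 ≤ (2 * (1 + 1/(1-ρ))) * (n:ℝ) ^ (-ρ) := by
  intro n hn
  have hN : (2:ℝ) ≤ (n:ℝ) := by exact_mod_cast hn
  have hN0 : (0:ℝ) < (n:ℝ) := by linarith
  have h1ρ : (0:ℝ) < 1 - ρ := by linarith
  set j₀ : ℕ := n - n/2 with hj₀def
  have hj₀1 : 1 ≤ j₀ := by omega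
  have hj₀n : j₀ ≤ n := by omega
  have h2j₀ : n ≤ 2 * j₀ := by omega
  have hj₀R : (1:ℝ) ≤ (j₀:ℝ) := by exact_mod_cast hj₀1
  have hj₀nR : (j₀:ℝ) ≤ (n:ℝ) := by exact_mod_cast hj₀n
  have h2j₀R : (n:ℝ) ≤ 2 * (j₀:ℝ) := by exact_mod_cast h2j₀
  set K : ℝ := 1/(1-ρ) with hK
  have hK0 : 0 < K := by positivity
  set th : ℕ → ℝ := fun j => K * (n:ℝ) ^ (ρ-1) * ((j₀:ℝ) ^ (1-ρ) - ((j:ℝ)-1) ^ (1-ρ))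
    with hth
  have hth_nonneg : ∀ j : ℕ, 1 ≤ j → j ≤ j₀ → 0 ≤ th j := by
    intro j h1 h2
    have hj1R : ((j:ℝ)-1) ≤ (j₀:ℝ) := by
      have : (j:ℝ) ≤ (j₀:ℝ) := by exact_mod_cast h2
      linarith
    have hj10 : (0:ℝ) ≤ (j:ℝ) - 1 := by
      have : (1:ℝ) ≤ (j:ℝ) := by exact_mod_cast h1
      linarith
    have hrp : ((j:ℝ)-1) ^ (1-ρ) ≤ (j₀:ℝ) ^ (1-ρ) :=
      Real.rpow_le_rpow hj10 hj1R (by linarith)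
    have : (0:ℝ) ≤ (n:ℝ) ^ (ρ-1) := by positivity
    have h' : (0:ℝ) ≤ (j₀:ℝ) ^ (1-ρ) - ((j:ℝ)-1) ^ (1-ρ) := by linarith
    positivity
  set Ψ : ℕ → ℝ := fun j => 2 * (n:ℝ) ^ (-ρ) * Pprod ρ j * (1 + th j) with hΨ
  have key : ∀ d j : ℕ, 1 ≤ j → j + d = j₀ → G n j ≤ Ψ j := by
    intro d
    induction d with
    | zero =>
      intro j h1 h2
      have hjn : j = j₀ := by omega
      -- base : G n j₀ ≤ 1 ≤ Ψ j₀
      have hG1 : G n j₀ ≤ 1 :=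
        (G_bounds hρ0 hGn hGrec n hn j₀ hj₀1 hj₀n).2
      have half : (1:ℝ)/2 ≤ (j₀:ℝ) / (n:ℝ) := by
        rw [div_le_div_iff₀ (by norm_num) hN0]
        linarith
      have hpow1 : ((1:ℝ)/2) ^ ρ ≤ ((j₀:ℝ)/(n:ℝ)) ^ ρ :=
        Real.rpow_le_rpow (by norm_num) half hρ0.le
      have hpow2 : (1:ℝ)/2 ≤ ((1:ℝ)/2) ^ ρ := by
        have := Real.rpow_le_rpow_of_exponent_ge (by norm_num : (0:ℝ) < 1/2)
          (by norm_num : (1:ℝ)/2 ≤ 1) hρ1.le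
        rwa [Real.rpow_one] at this
      have hdiv : ((j₀:ℝ)/(n:ℝ)) ^ ρ = (j₀:ℝ) ^ ρ * (n:ℝ) ^ (-ρ) := by
        rw [Real.div_rpow (by linarith) hN0.le, Real.rpow_neg hN0.le, div_eq_mul_inv]
      have hP : (j₀:ℝ) ^ ρ ≤ Pprod ρ j₀ := Pprod_ge hρ0 hρ1 j₀ hj₀1
      have hone : (1:ℝ) ≤ 2 * (n:ℝ) ^ (-ρ) * Pprod ρ j₀ := by
        have e1 : (1:ℝ) ≤ 2 * ((j₀:ℝ)/(n:ℝ)) ^ ρ := by linarith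
        rw [hdiv] at e1
        calc (1:ℝ) ≤ 2 * ((j₀:ℝ) ^ ρ * (n:ℝ) ^ (-ρ)) := e1
          _ ≤ 2 * (n:ℝ) ^ (-ρ) * Pprod ρ j₀ := by
              have h0 : (0:ℝ) ≤ (n:ℝ) ^ (-ρ) := by positivity
              nlinarith [hP]
      have hthj₀ : 0 ≤ th j₀ := hth_nonneg j₀ hj₀1 le_rfl
      have hΨ1 : (1:ℝ) ≤ Ψ j₀ := by
        rw [hΨ]
        simp only
        calc (1:ℝ) ≤ 2 * (n:ℝ) ^ (-ρ) * Pprod ρ j₀ := hone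
          _ ≤ 2 * (n:ℝ) ^ (-ρ) * Pprod ρ j₀ * (1 + th j₀) := by
              nlinarith [hone, hthj₀]
      rw [hjn]
      linarith
    | succ d ih =>
      intro j h1 h2
      have IH := ih (j+1) (by omega) (by omega)
      have hx1 : (1:ℝ) ≤ (j:ℝ) := by exact_mod_cast h1
      have hx0 : (0:ℝ) < (j:ℝ) := by linarith
      have hj2 : 2 * j ≤ n - 1 := by omega
      have hxN2 : 2 * (j:ℝ) ≤ (n:ℝ) - 1 := by
        have : (2*j : ℕ) ≤ ((n:ℕ) - 1 : ℕ) := hj2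
        have h' : ((2*j : ℕ):ℝ) ≤ (((n:ℕ) - 1 : ℕ):ℝ) := by exact_mod_cast this
        push_cast at h'
        rw [Nat.cast_sub (by omega : 1 ≤ n)] at h'
        push_cast at h'
        linarith
      rw [hGrec n hn j h1 (by omega)]
      -- pieces for step_up
      have hΦ0 : (0:ℝ) ≤ 2 * (n:ℝ) ^ (-ρ) * Pprod ρ j := by
        have := (Pprod_pos hρ0 j).le
        positivity
      have hθ10 : 0 ≤ th (j+1) := by
        apply hth_nonneg (j+1) (by omega) (by omega)
      -- θ decrement
      have hθd : (n:ℝ) ^ (ρ-1) * (j:ℝ) ^ (-ρ) ≤ th j - th (j+1) := by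
        have hd := rpow_decrement hρ0 hρ1 hx1
        have hrw : th j - th (j+1) =
            K * (n:ℝ) ^ (ρ-1) * ((j:ℝ) ^ (1-ρ) - ((j:ℝ)-1) ^ (1-ρ)) := by
          rw [hth]
          simp only
          push_cast
          ring_nf
        rw [hrw]
        have hKd : K * (1-ρ) = 1 := by rw [hK]; field_simp
        calc (n:ℝ) ^ (ρ-1) * (j:ℝ) ^ (-ρ)
            = K * (n:ℝ) ^ (ρ-1) * ((1-ρ) * (j:ℝ) ^ (-ρ)) := by
              rw [show K * (n:ℝ) ^ (ρ-1) * ((1-ρ) * (j:ℝ) ^ (-ρ))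
                  = (K * (1-ρ)) * ((n:ℝ) ^ (ρ-1) * (j:ℝ) ^ (-ρ)) by ring, hKd]
              ring
          _ ≤ K * (n:ℝ) ^ (ρ-1) * ((j:ℝ) ^ (1-ρ) - ((j:ℝ)-1) ^ (1-ρ)) := by
              apply mul_le_mul_of_nonneg_left hd (by positivity)
      have hθd0 : (0:ℝ) ≤ th j - th (j+1) := by
        have : (0:ℝ) ≤ (n:ℝ) ^ (ρ-1) * (j:ℝ) ^ (-ρ) := by positivity
        linarith
      -- the key forcing bound
      have hkey : (j:ℝ) / (n:ℝ) ≤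
          (2 * (n:ℝ) ^ (-ρ) * Pprod ρ j) * (th j - th (j+1)) * ((j:ℝ)/2) := by
        have hPj : (j:ℝ) ^ ρ ≤ Pprod ρ j := Pprod_ge hρ0 hρ1 j h1
        have e1 : (n:ℝ) ^ (-ρ) * (n:ℝ) ^ (ρ-1) = ((n:ℝ))⁻¹ := by
          rw [← Real.rpow_add hN0]
          norm_num
          rw [show -ρ + (ρ-1) = -1 by ring, Real.rpow_neg_one]
        have e2 : (j:ℝ) ^ ρ * (j:ℝ) ^ (-ρ) = 1 := by
          rw [← Real.rpow_add hx0]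
          simp
        have base : (j:ℝ) / (n:ℝ) =
            (2 * (n:ℝ) ^ (-ρ) * (j:ℝ) ^ ρ) * ((n:ℝ) ^ (ρ-1) * (j:ℝ) ^ (-ρ)) * ((j:ℝ)/2) := by
          have : (2 * (n:ℝ) ^ (-ρ) * (j:ℝ) ^ ρ) * ((n:ℝ) ^ (ρ-1) * (j:ℝ) ^ (-ρ)) * ((j:ℝ)/2)
              = ((n:ℝ) ^ (-ρ) * (n:ℝ) ^ (ρ-1)) * ((j:ℝ) ^ ρ * (j:ℝ) ^ (-ρ)) * (j:ℝ) := by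
            ring
          rw [this, e1, e2]
          field_simp
        rw [base]
        apply mul_le_mul_of_nonneg_right _ (by positivity)
        have s1 : (2 * (n:ℝ) ^ (-ρ) * (j:ℝ) ^ ρ) * ((n:ℝ) ^ (ρ-1) * (j:ℝ) ^ (-ρ))
            ≤ (2 * (n:ℝ) ^ (-ρ) * Pprod ρ j) * ((n:ℝ) ^ (ρ-1) * (j:ℝ) ^ (-ρ)) := by
          apply mul_le_mul_of_nonneg_right _ (by positivity)
          have h0 : (0:ℝ) ≤ (n:ℝ) ^ (-ρ) := by positivity
          nlinarith [hPj]
        have s2 : (2 * (n:ℝ) ^ (-ρ) * Pprod ρ j) * ((n:ℝ) ^ (ρ-1) * (j:ℝ) ^ (-ρ))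
            ≤ (2 * (n:ℝ) ^ (-ρ) * Pprod ρ j) * (th j - th (j+1)) :=
          mul_le_mul_of_nonneg_left hθd hΦ0
        linarith
      -- IH in the right form
      have hg : G n (j+1) ≤
          (2 * (n:ℝ) ^ (-ρ) * Pprod ρ j) * (((j:ℝ) + ρ)/(j:ℝ)) * (1 + th (j+1)) := by
        have hrw : (2 * (n:ℝ) ^ (-ρ) * Pprod ρ j) * (((j:ℝ) + ρ)/(j:ℝ)) * (1 + th (j+1))
            = Ψ (j+1) := by
          rw [hΨ]
          simp only
          rw [Pprod_succ ρ h1]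
          ring
        rw [hrw]
        exact IH
      have hg0 : 0 ≤ G n (j+1) :=
        (G_bounds hρ0 hGn hGrec n hn (j+1) (by omega) (by omega)).1
      have := step_up hρ0 hx1 hxN2 hN hΦ0 hθ10 hθd0 hkey hg hg0
      calc ((j:ℝ) / n + ((j:ℝ) * ((n:ℝ) - j) / ((n:ℝ) - 1)) * G n (j + 1)) /
            (ρ + (j:ℝ) / n + (j:ℝ) * ((n:ℝ) - j) / ((n:ℝ) - 1))
          ≤ (2 * (n:ℝ) ^ (-ρ) * Pprod ρ j) * (1 + th j) := this
        _ = Ψ j := by rw [hΨ]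
  -- conclude at j = 1
  have h1 : G n 1 ≤ Ψ 1 := key (j₀ - 1) 1 le_rfl (by omega)
  have hth1 : th 1 ≤ K := by
    rw [hth]
    simp only
    push_cast
    rw [show (1:ℝ) - 1 = 0 by ring, Real.zero_rpow (by linarith : 1 - ρ ≠ 0), sub_zero]
    have hj₀pow : (j₀:ℝ) ^ (1-ρ) ≤ (n:ℝ) ^ (1-ρ) :=
      Real.rpow_le_rpow (by linarith) hj₀nR (by linarith)
    have e3 : (n:ℝ) ^ (ρ-1) * (n:ℝ) ^ (1-ρ) = 1 := by
      rw [← Real.rpow_add hN0]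
      norm_num
    calc K * (n:ℝ) ^ (ρ-1) * (j₀:ℝ) ^ (1-ρ) ≤ K * (n:ℝ) ^ (ρ-1) * (n:ℝ) ^ (1-ρ) := by
          apply mul_le_mul_of_nonneg_left hj₀pow (by positivity)
      _ = K * ((n:ℝ) ^ (ρ-1) * (n:ℝ) ^ (1-ρ)) := by ring
      _ = K := by rw [e3]; ring
  have hΨ1val : Ψ 1 ≤ (2 * (1 + K)) * (n:ℝ) ^ (-ρ) := by
    rw [hΨ]
    simp only
    rw [Pprod_one]
    have h0 : (0:ℝ) ≤ (n:ℝ) ^ (-ρ) := by positivity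
    nlinarith [hth1, h0]
  calc G n 1 ≤ Ψ 1 := h1
    _ ≤ (2 * (1 + K)) * (n:ℝ) ^ (-ρ) := hΨ1val
    _ = (2 * (1 + 1/(1-ρ))) * (n:ℝ) ^ (-ρ) := by rw [hK]

end


/-- For `0 < ρ < 1`, the single-node freshness in the fully connected n-node
network decreases to 0 as `n^{-ρ}`: there are constants `c₂ ≥ c₁ > 0` and `N`
with `c₁ n^{-ρ} ≤ G n 1 ≤ c₂ n^{-ρ}` for all `n ≥ N`. -/
theorem fully_connected_freshness_scaling_small_rho
    (ρ : ℝ) (hρ0 : 0 < ρ) (hρ1 : ρ < 1)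
    (G : ℕ → ℕ → ℝ)
    (hGn : ∀ n : ℕ, 2 ≤ n → G n n = 1 / (1 + ρ))
    (hGrec : ∀ n : ℕ, 2 ≤ n → ∀ j : ℕ, 1 ≤ j → j ≤ n - 1 →
      G n j = ((j : ℝ) / n + ((j : ℝ) * ((n : ℝ) - j) / ((n : ℝ) - 1)) * G n (j + 1)) /
        (ρ + (j : ℝ) / n + (j : ℝ) * ((n : ℝ) - j) / ((n : ℝ) - 1))) :
    ∃ c₁ c₂ : ℝ, 0 < c₁ ∧ c₁ ≤ c₂ ∧ ∃ N : ℕ, ∀ n : ℕ, N ≤ n →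
      c₁ * (n : ℝ) ^ (-ρ) ≤ G n 1 ∧ G n 1 ≤ c₂ * (n : ℝ) ^ (-ρ) := by
  refine ⟨Real.exp (-ρ)/(1+ρ), 2 * (1 + 1/(1-ρ)), by positivity, ?_, 2, ?_⟩
  · have h1 : Real.exp (-ρ) ≤ 1 := Real.exp_le_one_iff.2 (by linarith)
    have h2 : Real.exp (-ρ)/(1+ρ) ≤ 1 := by
      rw [div_le_one (by linarith)]
      linarith
    have h3 : (0:ℝ) < 1 - ρ := by linarith
    have h4 : (0:ℝ) < 1/(1-ρ) := by positivity
    linarith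
  · intro n hn
    constructor
    · have := G_low hρ0 hρ1 hGn hGrec n hn 1 le_rfl (by omega)
      rwa [Pprod_one, mul_one] at this
    · exact G_up hρ0 hρ1 hGn hGrec n hn
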